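/- Let f = a_0 + a_1 z + ... + a_m z^m ∈ ℤ[z] be primitive with |a_m| α^m > |a_0| + |a_1|α + ... + |a_{m-1}|α^{m-1} for some α > 0. If there exist natural numbers n and d with n ≥ α + d such that |f(n)|/d is a prime power coprime to |f'(n)|, then f is irreducible in ℤ[z]. -/

import Mathlib

open Polynomial in
/-- All complex roots of `f` have absolute value `< α`. -/
lemma aux_root_lt_12 (m : ℕ) (f : ℤ[X]) (hdeg : f.natDegree = m) (α : ℝ) (hα : 0 < α)
    (hineq : (|f.coeff m| : ℝ) * α ^ m >
      ∑ i ∈ Finset.range m, (|f.coeff i| : ℝ) * α ^ i)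
    (z : ℂ) (hz : aeval z f = 0) : ‖z‖ < α := by
  by_contra hle
  push_neg at hle
  set t : ℝ := ‖z‖ with ht
  have hzα : (1:ℝ) ≤ t / α := (one_le_div hα).2 hle
  have hsum : (0:ℂ) = ∑ i ∈ Finset.range (m+1), (f.coeff i : ℂ) * z ^ i := by
    rw [← hz, aeval_eq_sum_range, hdeg]
    simp [zsmul_eq_mul]
  rw [Finset.sum_range_succ] at hsum
  have key : (f.coeff m : ℂ) * z ^ m = - ∑ i ∈ Finset.range m, (f.coeff i : ℂ) * z ^ i := by
    linear_combination -hsum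
  have habs : |(f.coeff m : ℝ)| * t ^ m ≤
      ∑ i ∈ Finset.range m, |(f.coeff i : ℝ)| * t ^ i := by
    have h1 : ‖(f.coeff m : ℂ) * z ^ m‖ = |(f.coeff m : ℝ)| * t ^ m := by
      rw [norm_mul, norm_pow, Complex.norm_intCast]
    calc |(f.coeff m : ℝ)| * t ^ m
        = ‖- ∑ i ∈ Finset.range m, (f.coeff i : ℂ) * z ^ i‖ := by
          rw [← key, h1]
      _ = ‖∑ i ∈ Finset.range m, (f.coeff i : ℂ) * z ^ i‖ :=
          norm_neg _
      _ ≤ ∑ i ∈ Finset.range m, ‖(f.coeff i : ℂ) * z ^ i‖ :=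
          norm_sum_le _ _
      _ = ∑ i ∈ Finset.range m, |(f.coeff i : ℝ)| * t ^ i := by
          refine Finset.sum_congr rfl fun i _ => ?_
          rw [norm_mul, norm_pow, Complex.norm_intCast]
  have hstep : ∑ i ∈ Finset.range m, |(f.coeff i : ℝ)| * t ^ i ≤
      (∑ i ∈ Finset.range m, |(f.coeff i : ℝ)| * α ^ i) * (t/α)^m := by
    rw [Finset.sum_mul]
    refine Finset.sum_le_sum fun i hi => ?_
    have h2 : (t/α)^i ≤ (t/α)^m := pow_le_pow_right₀ hzα (Finset.mem_range.1 hi).le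
    have h3 : t^i ≤ α^i * (t/α)^m := by
      have h4 : t^i = α^i * (t/α)^i := by
        rw [div_pow, mul_div_assoc', mul_div_cancel_left₀ _ (pow_ne_zero i hα.ne')]
      rw [h4]
      exact mul_le_mul_of_nonneg_left h2 (pow_nonneg hα.le i)
    calc |(f.coeff i : ℝ)| * t ^ i ≤ |(f.coeff i : ℝ)| * (α^i * (t/α)^m) :=
          mul_le_mul_of_nonneg_left h3 (abs_nonneg _)
      _ = |(f.coeff i : ℝ)| * α ^ i * (t/α)^m := by ring
  push_cast at hineq
  have hT : (0:ℝ) < (t/α)^m := pow_pos (lt_of_lt_of_le one_pos hzα) m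
  have hfin : (∑ i ∈ Finset.range m, |(f.coeff i : ℝ)| * α ^ i) * (t/α)^m <
      |(f.coeff m : ℝ)| * t ^ m := by
    have h5 := mul_lt_mul_of_pos_right hineq hT
    calc (∑ i ∈ Finset.range m, |(f.coeff i : ℝ)| * α ^ i) * (t/α)^m
        < |(f.coeff m : ℝ)| * α ^ m * (t/α)^m := h5
      _ = |(f.coeff m : ℝ)| * t ^ m := by
          rw [div_pow]
          field_simp
  linarith

open Polynomial in
/-- Any nonconstant integer divisor of `f` is large at `n`. -/
lemma aux_factor_lb_12 (m : ℕ) (f : ℤ[X]) (hdeg : f.natDegree = m) (α : ℝ) (hα : 0 < α)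
    (hineq : (|f.coeff m| : ℝ) * α ^ m >
      ∑ i ∈ Finset.range m, (|f.coeff i| : ℝ) * α ^ i)
    (n d : ℕ) (hd : 0 < d) (hnα : (n : ℝ) ≥ α + d)
    (g : ℤ[X]) (hgdvd : g ∣ f) (hgdeg : 1 ≤ g.natDegree) :
    (d : ℝ) < ((g.eval (n : ℤ)).natAbs : ℝ) := by
  have hinj : Function.Injective (Int.castRingHom ℂ : ℤ →+* ℂ) := Int.cast_injective
  have hg0 : g ≠ 0 := fun h => by simp [h] at hgdeg
  set G : ℂ[X] := g.map (Int.castRingHom ℂ) with hG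
  set x : ℂ := (((n:ℕ):ℤ) : ℂ) with hx
  have hG0 : G ≠ 0 := by
    rw [hG, Ne, Polynomial.map_eq_zero_iff hinj]
    exact hg0
  have hsplit : Splits G := IsAlgClosed.splits G
  have hfact := hsplit.eq_prod_roots
  -- evaluate at n
  have heval : ((g.eval ((n:ℕ):ℤ) : ℤ) : ℂ) = G.eval x := by
    rw [hG, eval_map, hx, eval₂_at_intCast]; rfl
  have habs : (((g.eval ((n:ℕ):ℤ)).natAbs : ℝ)) = ‖G.eval x‖ := by
    rw [← heval, Complex.norm_intCast, Nat.cast_natAbs, Int.cast_abs]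
  -- each root is small
  have hroot : ∀ z ∈ G.roots, ‖z‖ < α := by
    intro z hz
    have hz' : aeval z g = 0 := by
      have h6 := isRoot_of_mem_roots hz
      rw [hG, IsRoot, eval_map] at h6
      rw [aeval_def]
      exact h6
    obtain ⟨h, rfl⟩ := hgdvd
    exact aux_root_lt_12 m _ hdeg α hα hineq z (by simp [hz'])
  -- lower bound each |n - z|
  have hdr : (d:ℝ) ≥ 1 := by exact_mod_cast hd
  have hterm : ∀ z ∈ G.roots, (d:ℝ) < ‖x - z‖ := by
    intro z hz
    have h1 : ‖x‖ - ‖z‖ ≤ ‖x - z‖ :=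
      norm_sub_norm_le _ _
    have h2 : ‖x‖ = (n:ℝ) := by
      rw [hx]
      push_cast
      simp [Complex.norm_natCast]
    have h3 := hroot z hz
    linarith
  -- compute abs of eval
  have hcard : Multiset.card G.roots = g.natDegree := by
    have h1 : G.natDegree = g.natDegree := natDegree_map_eq_of_injective hinj g
    rw [← h1]
    exact splits_iff_card_roots.mp hsplit
  have hlead : (1:ℝ) ≤ ‖G.leadingCoeff‖ := by
    have h1 : G.leadingCoeff = ((g.leadingCoeff : ℤ) : ℂ) := by
      rw [hG, leadingCoeff_map_of_injective hinj]
      rfl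
    rw [h1, Complex.norm_intCast]
    have h2 : g.leadingCoeff ≠ 0 := leadingCoeff_ne_zero.mpr hg0
    have h3 : 1 ≤ |g.leadingCoeff| := Int.one_le_abs (by simpa using h2)
    exact_mod_cast h3
  have hprod : (d:ℝ) < (G.roots.map (fun z => ‖x - z‖)).prod := by
    have hne : G.roots ≠ 0 := by
      intro h
      rw [h] at hcard
      simp at hcard
      omega
    obtain ⟨z, hz⟩ := Multiset.exists_mem_of_ne_zero hne
    have hrest : (1:ℝ) ≤ ((G.roots.erase z).map (fun w => ‖x - w‖)).prod := by
      apply Multiset.one_le_prod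
      intro a ha
      obtain ⟨w, hw, rfl⟩ := Multiset.mem_map.1 ha
      have := hterm w (Multiset.mem_of_mem_erase hw)
      linarith
    have hcons : G.roots = z ::ₘ (G.roots.erase z) := (Multiset.cons_erase hz).symm
    rw [hcons, Multiset.map_cons, Multiset.prod_cons]
    have hz' := hterm z hz
    nlinarith [hz', hrest]
  have hevalabs : ‖G.eval x‖ =
      ‖G.leadingCoeff‖ * (G.roots.map (fun z => ‖x - z‖)).prod := by
    conv_lhs => rw [hfact]
    rw [eval_mul, eval_C, norm_mul]
    congr 1
    rw [eval_multiset_prod, Multiset.map_map, show ∀ s : Multiset ℂ, ‖s.prod‖ = (s.map norm).prod from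
        fun s => map_multiset_prod (normHom : ℂ →*₀ ℝ) s,
      Multiset.map_map]
    refine congrArg Multiset.prod (Multiset.map_congr rfl fun z hz => ?_)
    simp
  rw [habs, hevalabs]
  have hprodpos : (0:ℝ) < (G.roots.map (fun z => ‖x - z‖)).prod := by
    linarith
  nlinarith [hlead, hprod, hprodpos]

open Polynomial in
theorem stmt_12 (m : ℕ) (f : ℤ[X]) (hdeg : f.natDegree = m) (hprim : f.IsPrimitive)
    (α : ℝ) (hα : 0 < α)
    (hineq : (|f.coeff m| : ℝ) * α ^ m >
      ∑ i ∈ Finset.range m, (|f.coeff i| : ℝ) * α ^ i)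
    (n d : ℕ) (hn : 0 < n) (hd : 0 < d) (hnα : (n : ℝ) ≥ α + d)
    (hdvd : (d : ℤ) ∣ f.eval (n : ℤ))
    (hpp : ∃ p k : ℕ, p.Prime ∧ 1 ≤ k ∧ (f.eval (n : ℤ)).natAbs / d = p ^ k ∧
      Nat.Coprime (p ^ k) ((Polynomial.derivative f).eval (n : ℤ)).natAbs) :
    Irreducible f := by
  obtain ⟨p, k, hp, hk, hdiv, hcop⟩ := hpp
  -- |f(n)| = d * p^k
  have hddvd : d ∣ (f.eval (n:ℤ)).natAbs := by
    simpa using Int.natAbs_dvd_natAbs.mpr hdvd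
  have hN : (f.eval (n:ℤ)).natAbs = d * p ^ k := by
    rw [← hdiv, Nat.mul_div_cancel' hddvd]
  have hpk1 : 1 < p ^ k := Nat.one_lt_pow (by omega) hp.one_lt
  -- m ≥ 1
  have hm : 1 ≤ m := by
    by_contra hmc
    have hfc : f = C (f.coeff 0) := eq_C_of_natDegree_eq_zero (by omega)
    have hu : IsUnit (f.coeff 0) := hprim (f.coeff 0) (hfc ▸ dvd_rfl)
    have h1 : (f.eval (n:ℤ)).natAbs = 1 := by
      rw [hfc]
      rcases Int.isUnit_iff.mp hu with h | h <;> simp [h]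
    rw [hN] at h1
    nlinarith [hd, hpk1]
  -- p ∤ f'(n)
  have hpnd : ¬ ((p:ℤ) ∣ (Polynomial.derivative f).eval (n:ℤ)) := by
    intro hdvd'
    have h1 : p ∣ ((Polynomial.derivative f).eval (n:ℤ)).natAbs := by
      simpa using Int.natAbs_dvd_natAbs.mpr hdvd'
    have hpp' : p ∣ p ^ k := dvd_pow_self p (by omega)
    have h2 : p ∣ Nat.gcd (p ^ k) ((Polynomial.derivative f).eval (n:ℤ)).natAbs :=
      Nat.dvd_gcd hpp' h1
    rw [hcop] at h2
    exact hp.not_dvd_one h2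
  constructor
  · exact Polynomial.not_isUnit_of_natDegree_pos f (by omega)
  · rintro g h rfl
    by_contra hcon
    push_neg at hcon
    obtain ⟨hgu, hhu⟩ := hcon
    -- both factors have degree ≥ 1
    have hg0 : g ≠ 0 := by rintro rfl; simp at hdeg; omega
    have hh0 : h ≠ 0 := by rintro rfl; simp at hdeg; omega
    have hdegpos : ∀ q r : ℤ[X], g * h = q * r → ¬ IsUnit q → 1 ≤ q.natDegree := by
      intro q r heq hqu
      by_contra hqd
      have hqc : q = C (q.coeff 0) := eq_C_of_natDegree_eq_zero (by omega)
      have hu : IsUnit (q.coeff 0) := hprim (q.coeff 0) ⟨r, by rw [heq, ← hqc]⟩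
      apply hqu
      rw [hqc]
      exact hu.map Polynomial.C
    have hgdeg : 1 ≤ g.natDegree := hdegpos g h rfl hgu
    have hhdeg : 1 ≤ h.natDegree := hdegpos h g (mul_comm g h) hhu
    -- values at n
    set A := (g.eval (n:ℤ)).natAbs with hA
    set B := (h.eval (n:ℤ)).natAbs with hB
    have hAB : A * B = d * p ^ k := by
      rw [hA, hB, ← Int.natAbs_mul, ← eval_mul, hN]
    have hAd : d < A := by
      have := aux_factor_lb_12 m (g*h) hdeg α hα hineq n d hd hnα g ⟨h, rfl⟩ hgdeg
      exact_mod_cast this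
    have hBd : d < B := by
      have := aux_factor_lb_12 m (g*h) hdeg α hα hineq n d hd hnα h ⟨g, mul_comm g h⟩ hhdeg
      exact_mod_cast this
    -- p cannot divide both
    have hpAB : ¬ (p ∣ A ∧ p ∣ B) := by
      rintro ⟨hpA, hpB⟩
      apply hpnd
      have hpg : (p:ℤ) ∣ g.eval (n:ℤ) :=
        dvd_trans (Int.ofNat_dvd.mpr hpA) (Int.natAbs_dvd.mpr dvd_rfl)
      have hph : (p:ℤ) ∣ h.eval (n:ℤ) :=
        dvd_trans (Int.ofNat_dvd.mpr hpB) (Int.natAbs_dvd.mpr dvd_rfl)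
      rw [derivative_mul, eval_add, eval_mul, eval_mul]
      exact dvd_add (hph.mul_left _) (hpg.mul_right _)
    -- whichever p does not divide, it divides d, contradiction
    have key : ∀ X Y : ℕ, X * Y = d * p ^ k → d < Y → ¬ p ∣ Y → False := by
      intro X Y hXY hdY hpY
      have hYcop : Nat.Coprime Y (p ^ k) :=
        Nat.Coprime.pow_right k ((Nat.Prime.coprime_iff_not_dvd hp).mpr hpY).symm
      have hYdvd : Y ∣ d * p ^ k := ⟨X, by rw [← hXY, mul_comm]⟩
      have h1 : Y ∣ d := (Nat.Coprime.dvd_of_dvd_mul_right hYcop) hYdvd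
      have := Nat.le_of_dvd hd h1
      omega
    rcases Decidable.em (p ∣ B) with hpB | hpB
    · have hpA : ¬ p ∣ A := fun hpA => hpAB ⟨hpA, hpB⟩
      exact key B A (by rw [mul_comm]; exact hAB) hAd hpA
    · exact key A B hAB hBd hpB
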